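/- If A ⊆ B are bounded convex subsets of ℝ^d, then H^{d−1}(∂A) ≤ H^{d−1}(∂B), where ∂ denotes topological boundary and H^{d−1} is (d−1)-dimensional Hausdorff measure. -/

import Mathlib

open MeasureTheory Set Filter Topology Function
open scoped RealInnerProductSpace ENNReal NNReal Classical

noncomputable section

/-- `d`-dimensional Euclidean space. -/
abbrev Euc (d : ℕ) : Type := EuclideanSpace ℝ (Fin d)

/-- Gradient of the cost in the first variable: Dc(x,x̄). -/
def Dc {d : ℕ} (c : Euc d → Euc d → ℝ) (x y : Euc d) : Euc d :=
  gradient (fun x' => c x' y) x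

/-- Gradient of the cost in the second variable: D̄c(x,x̄). -/
def Dbc {d : ℕ} (c : Euc d → Euc d → ℝ) (x y : Euc d) : Euc d :=
  gradient (fun y' => c x y') y

/-- (Reg): the cost is C⁴ on cl(Ω) × cl(Ω̄). -/
def Reg {d : ℕ} (c : Euc d → Euc d → ℝ) (Om Omb : Set (Euc d)) : Prop :=
  ContDiffOn ℝ 4 (fun p : Euc d × Euc d => c p.1 p.2) (closure Om ×ˢ closure Omb)

/-- (Twist): x̄ ↦ −Dc(x₀,x̄) is injective on cl(Ω̄) and x ↦ −D̄c(x,x̄₀) is injective on cl(Ω). -/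
def Twist {d : ℕ} (c : Euc d → Euc d → ℝ) (Om Omb : Set (Euc d)) : Prop :=
  (∀ x₀ ∈ closure Om, Set.InjOn (fun y => -Dc c x₀ y) (closure Omb)) ∧
  (∀ y₀ ∈ closure Omb, Set.InjOn (fun x => -Dbc c x y₀) (closure Om))

/-- Partial derivative in the i-th coordinate of the first variable. -/
def pd1 {d : ℕ} (c : Euc d → Euc d → ℝ) (i : Fin d) : Euc d → Euc d → ℝ :=
  fun x y => fderiv ℝ (fun x' => c x' y) x (EuclideanSpace.single i 1)

/-- Partial derivative in the j-th coordinate of the second variable. -/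
def pd2 {d : ℕ} (c : Euc d → Euc d → ℝ) (j : Fin d) : Euc d → Euc d → ℝ :=
  fun x y => fderiv ℝ (fun y' => c x y') y (EuclideanSpace.single j 1)

/-- The matrix −∂²c/∂xⁱ∂x̄ʲ (i.e. −DD̄c). -/
def negMixed {d : ℕ} (c : Euc d → Euc d → ℝ) (x y : Euc d) : Matrix (Fin d) (Fin d) ℝ :=
  Matrix.of fun i j => -(pd1 (pd2 c j) i x y)

/-- The mixed Hessian c_{r,s̄}. -/
def mixedHess {d : ℕ} (c : Euc d → Euc d → ℝ) (x y : Euc d) : Matrix (Fin d) (Fin d) ℝ :=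
  Matrix.of fun r s => pd2 (pd1 c r) s x y

/-- (Nondeg): the mixed second-derivative matrix is invertible on cl(Ω) × cl(Ω̄). -/
def Nondeg {d : ℕ} (c : Euc d → Euc d → ℝ) (Om Omb : Set (Euc d)) : Prop :=
  ∀ x ∈ closure Om, ∀ y ∈ closure Omb, (negMixed c x y).det ≠ 0

/-- (MTW₊): the strong Ma–Trudinger–Wang condition. -/
def MTWplus {d : ℕ} (c : Euc d → Euc d → ℝ) (Om Omb : Set (Euc d)) : Prop :=
  ∃ δ₀ > (0:ℝ), ∀ x ∈ closure Om, ∀ y ∈ closure Omb, ∀ V η : Euc d,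
    (inner ℝ η V : ℝ) = 0 →
      δ₀ * ‖V‖ ^ 2 * ‖η‖ ^ 2 ≤
        ∑ i, ∑ j, ∑ k, ∑ l,
          (-(pd1 (pd1 (pd2 (pd1 c i) j) l) k x y) +
              ∑ r, ∑ s,
                pd2 (pd2 (pd1 c i) j) s x y * (mixedHess c x y)⁻¹ s r *
                  pd1 (pd1 (pd1 c r) l) k x y) *
            V i * V j * η k * η l

/-- c-convexity: Ω is c-convex w.r.t. every x̄ᵢ, and Ω̄ is c-convex w.r.t. every x ∈ Ω. -/
def CConvexAssumptions {d K : ℕ} (c : Euc d → Euc d → ℝ) (Om Omb : Set (Euc d))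
    (xb : Fin K → Euc d) : Prop :=
  (∀ i, Convex ℝ ((fun x => -Dbc c x (xb i)) '' Om)) ∧
  (∀ x ∈ Om, Convex ℝ ((fun y => -Dc c x y) '' Omb))

/-- The measure μ = I · (Lebesgue restricted to Ω). -/
def muM {d : ℕ} (Om : Set (Euc d)) (I : Euc d → ℝ) : Measure (Euc d) :=
  (volume.restrict Om).withDensity fun x => ENNReal.ofReal (I x)

/-- φ_d(x) = max_i (−c(x,x̄ᵢ) − log dᵢ). -/
def phiF {d K : ℕ} (c : Euc d → Euc d → ℝ) (xb : Fin K → Euc d) (dd : Fin K → ℝ)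
    (x : Euc d) : ℝ :=
  ⨆ i, (-(c x (xb i)) - Real.log (dd i))

/-- V_{d,i}. -/
def Vset {d K : ℕ} (c : Euc d → Euc d → ℝ) (Om : Set (Euc d)) (xb : Fin K → Euc d)
    (dd : Fin K → ℝ) (i : Fin K) : Set (Euc d) :=
  {x ∈ Om | ∀ k, -(c x (xb k)) - Real.log (dd k) ≤ -(c x (xb i)) - Real.log (dd i)}

/-- The visibility set vis_d(x̄ᵢ). -/
def vis {d K : ℕ} (c : Euc d → Euc d → ℝ) (Om : Set (Euc d)) (xb : Fin K → Euc d)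
    (dd : Fin K → ℝ) (i : Fin K) : Set (Euc d) :=
  {x ∈ Om | ∃ lam : ℝ, phiF c xb dd x = -(c x (xb i)) + lam ∧
      ∀ x' ∈ Om, -(c x' (xb i)) + lam ≤ phiF c xb dd x'}

/-- G^i(d) = μ(vis_d(x̄ᵢ)). -/
def G {d K : ℕ} (c : Euc d → Euc d → ℝ) (Om : Set (Euc d)) (I : Euc d → ℝ)
    (xb : Fin K → Euc d) (dd : Fin K → ℝ) (i : Fin K) : ℝ :=
  (muM Om I (vis c Om xb dd i)).toReal

/-- W_{i,j,d}. -/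
def Wset {d K : ℕ} (c : Euc d → Euc d → ℝ) (Om : Set (Euc d)) (xb : Fin K → Euc d)
    (dd : Fin K → ℝ) (i j : Fin K) : Set (Euc d) :=
  {x ∈ Om | -(c x (xb j)) - Real.log (dd j) ≤ -(c x (xb i)) - Real.log (dd i)}

/-- The c-exponential map at y: the inverse on Ω of x ↦ −D̄c(x,y). -/
def cexp {d : ℕ} (c : Euc d → Euc d → ℝ) (Om : Set (Euc d)) (y : Euc d) :
    Euc d → Euc d :=
  Function.invFunOn (fun x => -Dbc c x y) Om

/-- c̃_{k,i}(p) = c(Xᵢ(p), x̄_k) − c(Xᵢ(p), x̄ᵢ). -/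
def ctilde {d : ℕ} (c : Euc d → Euc d → ℝ) (Om : Set (Euc d)) (yk yi : Euc d)
    (p : Euc d) : ℝ :=
  c (cexp c Om yi p) yk - c (cexp c Om yi p) yi

/-- The set U_{k,d,Δd}. -/
def Uset {d K : ℕ} (c : Euc d → Euc d → ℝ) (Om : Set (Euc d)) (xb : Fin K → Euc d)
    (dd Δ : Fin K → ℝ) (i k : Fin K) : Set (Euc d) :=
  if 0 ≤ Δ k then
    {p ∈ (fun x => -Dbc c x (xb i)) '' Om |
        -(ctilde c Om (xb k) (xb i) p) = Real.log (dd k) - Real.log (dd i)} ∩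
      ((fun x => -Dbc c x (xb i)) '' ⋂ (l) (_ : l ≠ k), Wset c Om xb (dd + Δ) i l)
  else
    {p ∈ (fun x => -Dbc c x (xb i)) '' Om |
        -(ctilde c Om (xb k) (xb i) p) = Real.log (dd k + Δ k) - Real.log (dd i)} ∩
      ((fun x => -Dbc c x (xb i)) '' ⋂ (l) (_ : l ≠ k), Wset c Om xb dd i l)

/-- β_{i,k,Δd}. -/
def betaI {d K : ℕ} (c : Euc d → Euc d → ℝ) (Om : Set (Euc d)) (I : Euc d → ℝ)
    (xb : Fin K → Euc d) (dd Δ : Fin K → ℝ) (i k : Fin K) : ℝ :=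
  ∫ p in Uset c Om xb dd Δ i k,
    I (cexp c Om (xb i) p) * ‖gradient (ctilde c Om (xb k) (xb i)) p‖⁻¹ *
      |(fderiv ℝ (cexp c Om (xb i)) p).det| ∂(μH[(d : ℝ) - 1])

/-- The constant C of the paper. -/
def Cconst {d K : ℕ} (c : Euc d → Euc d → ℝ) (Om : Set (Euc d)) (xb : Fin K → Euc d) : ℝ :=
  sSup {r : ℝ | ∃ k l : Fin K, k ≠ l ∧ ∃ x ∈ Om,
    r = |(negMixed c x (xb l)).det| /
        ‖(EuclideanSpace.equiv (Fin d) ℝ).symm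
            ((negMixed c x (xb l))⁻¹.mulVec
              fun m => (-(Dc c x (xb l)) + Dc c x (xb k)) m)‖}

/-- T(x) = x̄ᵢ for the least index i with x ∈ V_{d,i} (junk value 0 otherwise). -/
def Tmap {d K : ℕ} (c : Euc d → Euc d → ℝ) (Om : Set (Euc d)) (xb : Fin K → Euc d)
    (dd : Fin K → ℝ) (x : Euc d) : Euc d :=
  match Fin.find? (fun i => decide (x ∈ Vset c Om xb dd i)) with
  | some i => xb i
  | none => 0

lemma proj_unique' {E : Type*} [NormedAddCommGroup E] [InnerProductSpace ℝ E]
    {K : Set E} {z₁ z₂ p q : E} (hp : p ∈ K) (hq : q ∈ K)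
    (h1 : ∀ w ∈ K, ⟪z₁ - p, w - p⟫ ≤ 0) (h2 : ∀ w ∈ K, ⟪z₂ - q, w - q⟫ ≤ 0) :
    ‖p - q‖ ≤ ‖z₁ - z₂‖ := by
  have ha : ⟪z₁ - p, q - p⟫ ≤ 0 := h1 q hq
  have hb : ⟪z₂ - q, p - q⟫ ≤ 0 := h2 p hp
  have hdecomp : p - q = (z₁ - z₂) + (p - z₁) + (z₂ - q) := by abel
  have e1 : ⟪p - q, p - q⟫ = ⟪z₁ - z₂, p - q⟫ + ⟪p - z₁, p - q⟫ + ⟪z₂ - q, p - q⟫ := by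
    nth_rewrite 1 [hdecomp]
    rw [inner_add_left, inner_add_left]
  have e2 : ⟪p - z₁, p - q⟫ = ⟪z₁ - p, q - p⟫ := by
    have h1 : p - z₁ = -(z₁ - p) := by abel
    have h2 : p - q = -(q - p) := by abel
    rw [h1, h2, inner_neg_neg]
  have e3 : ⟪p - q, p - q⟫ ≤ ⟪z₁ - z₂, p - q⟫ := by rw [e1, e2]; linarith
  have e4 : ⟪z₁ - z₂, p - q⟫ ≤ ‖z₁ - z₂‖ * ‖p - q‖ := real_inner_le_norm _ _
  have e5 : ‖p - q‖ ^ 2 ≤ ‖z₁ - z₂‖ * ‖p - q‖ := by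
    rw [← real_inner_self_eq_norm_sq]; linarith
  nlinarith [norm_nonneg (p - q), norm_nonneg (z₁ - z₂)]

lemma ray_frontier' {E : Type*} [NormedAddCommGroup E] [NormedSpace ℝ E]
    {L : Set E} (hL : IsClosed L) (hbdd : Bornology.IsBounded L)
    {x v : E} (hx : x ∈ L) (hv : v ≠ 0) :
    ∃ t : ℝ, 0 ≤ t ∧ x + t • v ∈ frontier L := by
  obtain ⟨R, hR⟩ := hbdd.subset_closedBall (0 : E)
  have hxR : ‖x‖ ≤ R := by simpa using hR hx
  have hvpos : (0:ℝ) < ‖v‖ := norm_pos_iff.mpr hv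
  set T : ℝ := (R + ‖x‖ + 1) / ‖v‖ with hT
  have hTpos : 0 < T := div_pos (by linarith [norm_nonneg x]) hvpos
  have hnot : ∀ t : ℝ, T < t → x + t • v ∉ L := by
    intro t ht hmem
    have h1 : ‖x + t • v‖ ≤ R := by simpa using hR hmem
    have h2 : t * ‖v‖ = ‖(x + t • v) - x‖ := by
      rw [add_sub_cancel_left, norm_smul]
      have : 0 ≤ t := le_of_lt (lt_trans hTpos ht)
      simp [abs_of_nonneg this]
    have h3 : ‖(x + t • v) - x‖ ≤ ‖x + t • v‖ + ‖x‖ := norm_sub_le _ _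
    have h4 : T * ‖v‖ = R + ‖x‖ + 1 := div_mul_cancel₀ _ (ne_of_gt hvpos)
    have h5 : T * ‖v‖ < t * ‖v‖ := by exact mul_lt_mul_of_pos_right ht hvpos
    linarith
  set S : Set ℝ := Icc 0 T ∩ {t : ℝ | x + t • v ∈ L} with hS
  have hSne : (0:ℝ) ∈ S := by
    constructor
    · exact ⟨le_rfl, le_of_lt hTpos⟩
    · simpa using hx
  have hSclosed : IsClosed S :=
    isClosed_Icc.inter (hL.preimage (by continuity))
  have hSbdd : BddAbove S := BddAbove.mono (inter_subset_left) bddAbove_Icc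
  set t₀ := sSup S with ht₀def
  have ht₀ : t₀ ∈ S := hSclosed.csSup_mem ⟨0, hSne⟩ hSbdd
  refine ⟨t₀, ht₀.1.1, ?_⟩
  rw [frontier_eq_closure_inter_closure]
  refine ⟨subset_closure ht₀.2, ?_⟩
  have hgt : ∀ t : ℝ, t₀ < t → x + t • v ∉ L := by
    intro t ht hmem
    rcases le_or_gt t T with h | h
    · have : t ∈ S := ⟨⟨le_trans ht₀.1.1 (le_of_lt ht), h⟩, hmem⟩
      exact absurd (le_csSup hSbdd this) (not_le.mpr ht)
    · exact hnot t h hmem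
  have htend : Tendsto (fun n : ℕ => x + (t₀ + 1/(n+1)) • v) atTop (𝓝 (x + t₀ • v)) := by
    have h1 : Tendsto (fun n : ℕ => t₀ + 1/((n:ℝ)+1)) atTop (𝓝 t₀) := by
      have := tendsto_one_div_add_atTop_nhds_zero_nat (𝕜 := ℝ)
      simpa using tendsto_const_nhds.add this
    exact tendsto_const_nhds.add (h1.smul tendsto_const_nhds)
  refine mem_closure_of_tendsto htend (Eventually.of_forall fun n => ?_)
  refine hgt _ ?_
  have h : (0:ℝ) < 1/((n:ℝ)+1) := by positivity
  linarith

lemma exists_support' {d : ℕ} {A : Set (EuclideanSpace ℝ (Fin d))} (hA : Convex ℝ A)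
    (hne : A.Nonempty) {x : EuclideanSpace ℝ (Fin d)} (hx : x ∈ frontier A) :
    ∃ v : EuclideanSpace ℝ (Fin d), v ≠ 0 ∧ ∀ w ∈ closure A, ⟪v, w - x⟫ ≤ 0 := by
  have hxcl : x ∈ closure A := frontier_subset_closure hx
  have hxi : x ∉ interior A := fun h => hx.2 h
  rcases (interior A).eq_empty_or_nonempty with hint | ⟨y, hy⟩
  · -- flat case
    have hspan : affineSpan ℝ A ≠ ⊤ := by
      intro h
      rw [← hA.interior_nonempty_iff_affineSpan_eq_top] at h
      exact h.ne_empty hint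
    have hAspan : (affineSpan ℝ A : Set (EuclideanSpace ℝ (Fin d))).Nonempty :=
      hne.mono (subset_affineSpan ℝ A)
    have hdir : (affineSpan ℝ A).direction ≠ ⊤ := by
      intro h
      exact hspan ((AffineSubspace.direction_eq_top_iff_of_nonempty hAspan).mp h)
    have horth : ((affineSpan ℝ A).direction)ᗮ ≠ ⊥ := by
      rwa [Ne, Submodule.orthogonal_eq_bot_iff]
    obtain ⟨v, hvmem, hvne⟩ := Submodule.exists_mem_ne_zero_of_ne_bot horth
    refine ⟨v, hvne, fun w hw => ?_⟩
    have hclosed : IsClosed (affineSpan ℝ A : Set (EuclideanSpace ℝ (Fin d))) :=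
      (affineSpan ℝ A).closed_of_finiteDimensional
    have hsub : closure A ⊆ (affineSpan ℝ A : Set (EuclideanSpace ℝ (Fin d))) :=
      hclosed.closure_subset_iff.mpr (subset_affineSpan ℝ A)
    have hwd : w - x ∈ (affineSpan ℝ A).direction := by
      have := AffineSubspace.vsub_mem_direction (hsub hw) (hsub hxcl)
      simpa using this
    have : ⟪w - x, v⟫ = 0 := (Submodule.mem_orthogonal _ v).mp hvmem _ hwd
    rw [real_inner_comm] at this
    exact le_of_eq this
  · obtain ⟨f, hf⟩ := geometric_hahn_banach_open_point hA.interior isOpen_interior hxi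
    set v := (InnerProductSpace.toDual ℝ (EuclideanSpace ℝ (Fin d))).symm f with hv
    have hinner : ∀ a, ⟪v, a⟫ = f a := fun a => InnerProductSpace.toDual_symm_apply
    have hvne : v ≠ 0 := by
      intro h
      have := hf y hy
      rw [← hinner y, ← hinner x, h] at this
      simp at this
    refine ⟨v, hvne, fun w hw => ?_⟩
    have hfw : f w ≤ f x := by
      have hcombo : ∀ t : ℝ, t ∈ Set.Ioc (0:ℝ) 1 → t * f y + (1 - t) * f w < f x := by
        intro t ht
        have hmem : t • y + (1 - t) • w ∈ interior A :=
          hA.combo_interior_closure_mem_interior hy hw ht.1 (by linarith [ht.2]) (by ring)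
        have := hf _ hmem
        simpa [map_add, _root_.map_smul, smul_eq_mul] using this
      have htend : Tendsto (fun t : ℝ => t * f y + (1 - t) * f w) (𝓝[>] 0) (𝓝 (f w)) := by
        have : Continuous (fun t : ℝ => t * f y + (1 - t) * f w) := by continuity
        have h0 := (this.tendsto 0).mono_left (nhdsWithin_le_nhds (s := Set.Ioi (0:ℝ)))
        simpa using h0
      refine le_of_tendsto htend ?_
      filter_upwards [Ioc_mem_nhdsGT_of_mem (Set.mem_Ico.mpr ⟨le_rfl, one_pos⟩)] with t ht
      exact le_of_lt (hcombo t ht)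
    have : ⟪v, w - x⟫ = f w - f x := by rw [inner_sub_right, hinner, hinner]
    rw [this]
    linarith

theorem statement6
    {d : ℕ} (hd : 1 ≤ d) (A B : Set (EuclideanSpace ℝ (Fin d)))
    (hA : Convex ℝ A) (hB : Convex ℝ B)
    (hAbdd : Bornology.IsBounded A) (hBbdd : Bornology.IsBounded B)
    (hAB : A ⊆ B) :
    μH[(d : ℝ) - 1] (frontier A) ≤ μH[(d : ℝ) - 1] (frontier B) := by
  have hd0 : (0:ℝ) ≤ (d:ℝ) - 1 := by
    have : (1:ℝ) ≤ (d:ℝ) := by exact_mod_cast hd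
    linarith
  rcases A.eq_empty_or_nonempty with rfl | hne
  · simp
  have hKconv : Convex ℝ (closure A) := hA.closure
  have hKne : (closure A).Nonempty := hne.closure
  have hLclosed : IsClosed (closure B) := isClosed_closure
  have hLbdd : Bornology.IsBounded (closure B) := hBbdd.closure
  have hKL : closure A ⊆ closure B := closure_mono hAB
  choose f hfK hfmin using fun z =>
    exists_norm_eq_iInf_of_complete_convex hKne isClosed_closure.isComplete hKconv z
  have hfvar : ∀ z, ∀ w ∈ closure A, ⟪z - f z, w - f z⟫ ≤ 0 := fun z =>
    (norm_eq_iInf_iff_real_inner_le_zero hKconv (hfK z)).mp (hfmin z)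
  have hlip : LipschitzWith 1 f := LipschitzWith.of_dist_le_mul fun z₁ z₂ => by
    rw [dist_eq_norm, dist_eq_norm, NNReal.coe_one, one_mul]
    exact proj_unique' (hfK z₁) (hfK z₂) (hfvar z₁) (hfvar z₂)
  have hsub : frontier A ⊆ f '' frontier (closure B) := by
    intro x hx
    have hxK : x ∈ closure A := frontier_subset_closure hx
    obtain ⟨v, hv0, hvsupp⟩ := exists_support' hA hne hx
    obtain ⟨t, ht0, htz⟩ := ray_frontier' hLclosed hLbdd (hKL hxK) hv0
    refine ⟨x + t • v, htz, ?_⟩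
    have hxvar : ∀ w ∈ closure A, ⟪(x + t • v) - x, w - x⟫ ≤ 0 := by
      intro w hw
      rw [add_sub_cancel_left, real_inner_smul_left]
      exact mul_nonpos_of_nonneg_of_nonpos ht0 (hvsupp w hw)
    have hle := proj_unique' (hfK (x + t • v)) hxK (hfvar (x + t • v)) hxvar
    rw [sub_self, norm_zero] at hle
    have := le_antisymm hle (norm_nonneg _)
    rwa [norm_sub_eq_zero_iff] at this
  calc μH[(d:ℝ) - 1] (frontier A) ≤ μH[(d:ℝ) - 1] (f '' frontier (closure B)) :=
        measure_mono hsub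
    _ ≤ μH[(d:ℝ) - 1] (frontier (closure B)) := by
        simpa using hlip.hausdorffMeasure_image_le hd0 (frontier (closure B))
    _ ≤ μH[(d:ℝ) - 1] (frontier B) := measure_mono frontier_closure_subset


end
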